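/- arXiv:2006.06279 — 2 statements merged into one kernel-verified Lean document; each statement's English description precedes it below -/
import Mathlib

section
/- Let $(X,\mathfrak{F},\mu)$ be a measure space, $p \geq 1$, and let $\Phi : L^p(X;\mathbb{C}) \to \mathbb{C}$ satisfy the valuation property $\Phi(f \vee g) + \Phi(f \wedge g) = \Phi(f) + \Phi(g)$ for all $f,g$, and $\Phi(0) = 0$. Then for every $f \in L^p(X;\mathbb{C})$, $\Phi(f) = \Phi(\Re f) + \Phi(i \Im f)$, where $\Re f$ and $i\Im f$ are regarded as elements of $L^p(X;\mathbb{C})$. -/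
open MeasureTheory Complex

/-- The componentwise lattice join of complex-valued functions. -/
noncomputable def fVee {X : Type*} (f g : X → ℂ) : X → ℂ :=
  fun x => ⟨max (f x).re (g x).re, max (f x).im (g x).im⟩

/-- The componentwise lattice meet of complex-valued functions. -/
noncomputable def fWedge {X : Type*} (f g : X → ℂ) : X → ℂ :=
  fun x => ⟨min (f x).re (g x).re, min (f x).im (g x).im⟩

theorem valuation_split_re_im {X : Type*} [MeasurableSpace X] (μ : Measure X) (p : ℝ)
    (hp : 1 ≤ p) (Φ : (X → ℂ) → ℂ)
    (hval : ∀ f g : X → ℂ, MemLp f (ENNReal.ofReal p) μ → MemLp g (ENNReal.ofReal p) μ →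
      Φ (fVee f g) + Φ (fWedge f g) = Φ f + Φ g)
    (hΦ0 : Φ 0 = 0)
    (f : X → ℂ) (hf : MemLp f (ENNReal.ofReal p) μ) :
    Φ f = Φ (fun x => ((f x).re : ℂ)) + Φ (fun x => Complex.I * ((f x).im : ℂ)) := by
  set g₁ : X → ℂ := fun x => ((f x).re : ℂ) with hg₁
  set g₂ : X → ℂ := fun x => Complex.I * ((f x).im : ℂ) with hg₂
  have hg₁m : MemLp g₁ (ENNReal.ofReal p) μ := by
    have := (Complex.ofRealCLM.comp (Complex.reCLM)).comp_memLp' hf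
    exact this
  have hg₂m : MemLp g₂ (ENNReal.ofReal p) μ := by
    have h := ((Complex.ofRealCLM.comp (Complex.imCLM)).comp_memLp' hf).const_mul Complex.I
    simpa [Function.comp] using h
  have h0 : MemLp (0 : X → ℂ) (ENNReal.ofReal p) μ := MemLp.zero
  have e1 : fVee f 0 = fVee g₁ g₂ := by
    funext x
    simp only [fVee, hg₁, hg₂, Pi.zero_apply]
    norm_num [max_comm]
  have e2 : fWedge f 0 = fWedge g₁ g₂ := by
    funext x
    simp only [fWedge, hg₁, hg₂, Pi.zero_apply]
    norm_num [min_comm]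
  have h1 := hval f 0 hf h0
  have h2 := hval g₁ g₂ hg₁m hg₂m
  rw [e1, e2, h2, hΦ0] at h1
  linear_combination -h1
end

section
/- Let $(X,\mathfrak{F},\mu)$ be a measure space with $\mu(X) = \infty$, $p \geq 1$, and $h_1,h_2,h_3,h_4 : \mathbb{R} \to \mathbb{R}$ continuous with $|h_k(a)| \leq \gamma_k|a|^p$ for all $a$. Define $\Phi(f) = \int_X(h_1 \circ \Re f + h_3 \circ \Im f)d\mu + i\int_X(h_2 \circ \Re f + h_4 \circ \Im f)d\mu$ on $L^p(X;\mathbb{C})$. If $f_j \to f$ in $L^p(X;\mathbb{C})$ norm and $\mu$-a.e., then $\Phi(f_j) \to \Phi(f)$. -/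
open MeasureTheory Complex Filter

/-- Generalized dominated convergence (lintegral form). -/
lemma gdct {X : Type*} [MeasurableSpace X] {μ : Measure X}
    {φ G : ℕ → X → ENNReal} {Glim : X → ENNReal}
    (hφm : ∀ j, AEMeasurable (φ j) μ)
    (hle : ∀ j, φ j ≤ᵐ[μ] G j)
    (hφ0 : ∀ᵐ x ∂μ, Tendsto (fun j => φ j x) atTop (nhds 0))
    (hGt : ∀ᵐ x ∂μ, Tendsto (fun j => G j x) atTop (nhds (Glim x)))
    (hGfin : ∀ j, ∫⁻ x, G j x ∂μ ≠ ⊤)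
    (hGlimfin : ∫⁻ x, Glim x ∂μ ≠ ⊤)
    (hsubm : ∀ j, AEMeasurable (fun x => G j x - φ j x) μ)
    (hGint : Tendsto (fun j => ∫⁻ x, G j x ∂μ) atTop (nhds (∫⁻ x, Glim x ∂μ))) :
    Tendsto (fun j => ∫⁻ x, φ j x ∂μ) atTop (nhds 0) := by
  have key : ∀ j, (∫⁻ x, G j x - φ j x ∂μ) + ∫⁻ x, φ j x ∂μ = ∫⁻ x, G j x ∂μ := by
    intro j
    rw [← lintegral_add_right' _ (hφm j)]
    refine lintegral_congr_ae ?_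
    filter_upwards [hle j] with x hx using tsub_add_cancel_of_le hx
  have hsub_le : ∀ j, (∫⁻ x, G j x - φ j x ∂μ) ≤ ∫⁻ x, G j x ∂μ :=
    fun j => lintegral_mono fun x => tsub_le_self
  have hA : Tendsto (fun j => ∫⁻ x, G j x - φ j x ∂μ) atTop (nhds (∫⁻ x, Glim x ∂μ)) := by
    refine tendsto_of_le_liminf_of_limsup_le ?_ ?_
    · have h1 : (∫⁻ x, Glim x ∂μ) = ∫⁻ x, Filter.liminf (fun j => G j x - φ j x) atTop ∂μ := by
        refine lintegral_congr_ae ?_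
        filter_upwards [hφ0, hGt] with x hx0 hxG
        have : Tendsto (fun j => G j x - φ j x) atTop (nhds (Glim x - 0)) :=
          ENNReal.Tendsto.sub hxG hx0 (Or.inr (by simp))
        simp only [tsub_zero] at this
        exact (this.liminf_eq).symm
      rw [h1]
      exact lintegral_liminf_le' hsubm
    · calc Filter.limsup (fun j => ∫⁻ x, G j x - φ j x ∂μ) atTop
          ≤ Filter.limsup (fun j => ∫⁻ x, G j x ∂μ) atTop :=
            Filter.limsup_le_limsup (Filter.Eventually.of_forall hsub_le)
        _ = ∫⁻ x, Glim x ∂μ := hGint.limsup_eq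
  have hφeq : ∀ j, (∫⁻ x, φ j x ∂μ) = (∫⁻ x, G j x ∂μ) - ∫⁻ x, G j x - φ j x ∂μ := by
    intro j
    have hfin : (∫⁻ x, G j x - φ j x ∂μ) ≠ ⊤ := ((hsub_le j).trans_lt (hGfin j).lt_top).ne
    rw [← key j, ENNReal.add_sub_cancel_left hfin]
  simp only [hφeq]
  have := ENNReal.Tendsto.sub hGint hA (Or.inl hGlimfin)
  simpa using this


section comp

variable {X : Type*} [MeasurableSpace X] {μ : Measure X} {p γ : ℝ}

/-- Integrability of `h ∘ u ∘ F` for `F ∈ ℒp`. -/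
lemma integrable_comp_aux (hp : 1 ≤ p) {h : ℝ → ℝ} (hc : Continuous h)
    (hb : ∀ a : ℝ, |h a| ≤ γ * |a| ^ p) {u : ℂ → ℝ} (hu : Continuous u)
    (hu1 : ∀ z : ℂ, |u z| ≤ ‖z‖) {F : X → ℂ} (hF : MemLp F (ENNReal.ofReal p) μ) :
    Integrable (fun x => h (u (F x))) μ := by
  have hp0 : (0:ℝ) ≤ p := le_trans zero_le_one hp
  have hq0 : ENNReal.ofReal p ≠ 0 := by
    simp [ENNReal.ofReal_eq_zero]; linarith
  have hqt : ENNReal.ofReal p ≠ ⊤ := ENNReal.ofReal_ne_top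
  have hmeas : AEStronglyMeasurable (fun x => h (u (F x))) μ :=
    (hc.comp hu).comp_aestronglyMeasurable hF.1
  have hint : Integrable (fun x => γ * ‖F x‖ ^ p) μ := by
    have := hF.integrable_norm_rpow hq0 hqt
    rw [ENNReal.toReal_ofReal hp0] at this
    exact this.const_mul γ
  refine hint.mono' hmeas (Filter.Eventually.of_forall fun x => ?_)
  have h1 : |h (u (F x))| ≤ γ * |u (F x)| ^ p := hb _
  have h2 : |u (F x)| ^ p ≤ ‖F x‖ ^ p :=
    Real.rpow_le_rpow (abs_nonneg _) (hu1 _) hp0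
  have hγ' : 0 ≤ γ := by
    have := (abs_nonneg (h 1)).trans (hb 1)
    simpa using this
  calc ‖h (u (F x))‖ = |h (u (F x))| := rfl
    _ ≤ γ * |u (F x)| ^ p := h1
    _ ≤ γ * ‖F x‖ ^ p := by nlinarith [Real.rpow_nonneg (abs_nonneg (u (F x))) p]

end comp

section comp2
variable {X : Type*} [MeasurableSpace X] {μ : Measure X} {p γ : ℝ}

/-- Convergence of `∫⁻ ‖f j‖^p` to `∫⁻ ‖g‖^p` from Lp convergence. -/
lemma lintegral_rpow_tendsto (hp : 1 ≤ p) {f : ℕ → X → ℂ} {g : X → ℂ}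
    (hf : ∀ j, MemLp (f j) (ENNReal.ofReal p) μ) (hg : MemLp g (ENNReal.ofReal p) μ)
    (hLp : Tendsto (fun j => eLpNorm (f j - g) (ENNReal.ofReal p) μ) atTop (nhds 0)) :
    Tendsto (fun j => ∫⁻ x, (‖f j x‖₊ : ENNReal) ^ p ∂μ) atTop
      (nhds (∫⁻ x, (‖g x‖₊ : ENNReal) ^ p ∂μ)) := by
  have hp0 : (0:ℝ) < p := lt_of_lt_of_le zero_lt_one hp
  set q := ENNReal.ofReal p with hq
  have hq0 : q ≠ 0 := by simp [hq, ENNReal.ofReal_eq_zero]; linarith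
  have hqt : q ≠ ⊤ := ENNReal.ofReal_ne_top
  have hqr : q.toReal = p := ENNReal.toReal_ofReal hp0.le
  have hq1 : 1 ≤ q := by rw [hq]; exact ENNReal.one_le_ofReal.mpr hp
  -- eLpNorm (f j) → eLpNorm g
  have hgt : eLpNorm g q μ ≠ ⊤ := hg.eLpNorm_ne_top
  have htend : Tendsto (fun j => eLpNorm (f j) q μ) atTop (nhds (eLpNorm g q μ)) := by
    have hup : ∀ j, eLpNorm (f j) q μ ≤ eLpNorm g q μ + eLpNorm (f j - g) q μ := by
      intro j
      have : eLpNorm (g + (f j - g)) q μ ≤ eLpNorm g q μ + eLpNorm (f j - g) q μ :=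
        eLpNorm_add_le hg.1 ((hf j).1.sub hg.1) hq1
      simpa using this
    have hlo : ∀ j, eLpNorm g q μ - eLpNorm (f j - g) q μ ≤ eLpNorm (f j) q μ := by
      intro j
      rw [tsub_le_iff_right]
      have : eLpNorm (f j + (g - f j)) q μ ≤ eLpNorm (f j) q μ + eLpNorm (g - f j) q μ :=
        eLpNorm_add_le (hf j).1 (hg.1.sub (hf j).1) hq1
      simpa [eLpNorm_sub_comm] using this
    have hL : Tendsto (fun j => eLpNorm g q μ - eLpNorm (f j - g) q μ) atTop
        (nhds (eLpNorm g q μ)) := by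
      have := ENNReal.Tendsto.sub (tendsto_const_nhds
        (x := eLpNorm g q μ) (f := atTop)) hLp (Or.inl hgt)
      simpa using this
    have hU : Tendsto (fun j => eLpNorm g q μ + eLpNorm (f j - g) q μ) atTop
        (nhds (eLpNorm g q μ)) := by
      have := Tendsto.add (tendsto_const_nhds (x := eLpNorm g q μ) (f := atTop)) hLp
      simpa using this
    exact tendsto_of_tendsto_of_tendsto_of_le_of_le hL hU hlo hup
  -- raise to power p
  have hkey : ∀ (F : X → ℂ), AEStronglyMeasurable F μ →
      (∫⁻ x, (‖F x‖₊ : ENNReal) ^ p ∂μ) = (eLpNorm F q μ) ^ p := by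
    intro F hF
    rw [eLpNorm_eq_lintegral_rpow_enorm_toReal hq0 hqt, hqr, ← ENNReal.rpow_mul, one_div,
      inv_mul_cancel₀ hp0.ne', ENNReal.rpow_one]
    rfl
  rw [hkey g hg.1]
  have heq : (fun j => ∫⁻ x, (‖f j x‖₊ : ENNReal) ^ p ∂μ)
      = fun j => (eLpNorm (f j) q μ) ^ p := funext fun j => hkey (f j) (hf j).1
  rw [heq]
  exact htend.ennrpow_const p
end comp2

section comp3
variable {X : Type*} [MeasurableSpace X] {μ : Measure X} {p γ : ℝ}

lemma tendsto_integral_comp (hp : 1 ≤ p) (hγ : 0 ≤ γ) {h : ℝ → ℝ} (hc : Continuous h)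
    (hb : ∀ a : ℝ, |h a| ≤ γ * |a| ^ p) {u : ℂ → ℝ} (hu : Continuous u)
    (hu1 : ∀ z : ℂ, |u z| ≤ ‖z‖) {f : ℕ → X → ℂ} {g : X → ℂ}
    (hf : ∀ j, MemLp (f j) (ENNReal.ofReal p) μ) (hg : MemLp g (ENNReal.ofReal p) μ)
    (hLp : Tendsto (fun j => eLpNorm (f j - g) (ENNReal.ofReal p) μ) atTop (nhds 0))
    (hae : ∀ᵐ x ∂μ, Tendsto (fun j => f j x) atTop (nhds (g x))) :
    Tendsto (fun j => ∫ x, h (u (f j x)) ∂μ) atTop (nhds (∫ x, h (u (g x)) ∂μ)) := by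
  have hp0 : (0:ℝ) < p := lt_of_lt_of_le zero_lt_one hp
  have hq0 : ENNReal.ofReal p ≠ 0 := by simp [ENNReal.ofReal_eq_zero]; linarith
  have hqt : ENNReal.ofReal p ≠ ⊤ := ENNReal.ofReal_ne_top
  set C : ENNReal := ENNReal.ofReal γ with hC
  have hCt : C ≠ ⊤ := ENNReal.ofReal_ne_top
  -- integrability
  have hig : Integrable (fun x => h (u (g x))) μ :=
    integrable_comp_aux hp hc hb hu hu1 hg
  have hifj : ∀ j, Integrable (fun x => h (u (f j x))) μ :=
    fun j => integrable_comp_aux hp hc hb hu hu1 (hf j)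
  refine tendsto_integral_of_L1 _ hig.1 (Filter.Eventually.of_forall hifj) ?_
  -- set up gdct
  set φ : ℕ → X → ENNReal := fun j x => (‖h (u (f j x)) - h (u (g x))‖₊ : ENNReal) with hφ
  set G : ℕ → X → ENNReal :=
    fun j x => C * (‖f j x‖₊ : ENNReal) ^ p + C * (‖g x‖₊ : ENNReal) ^ p with hG
  set Glim : X → ENNReal :=
    fun x => C * (‖g x‖₊ : ENNReal) ^ p + C * (‖g x‖₊ : ENNReal) ^ p with hGl
  have hpow_m : ∀ (F : X → ℂ), AEStronglyMeasurable F μ →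
      AEMeasurable (fun x => (‖F x‖₊ : ENNReal) ^ p) μ := fun F hF =>
    (ENNReal.continuous_rpow_const.measurable).comp_aemeasurable hF.enorm
  have hφm : ∀ j, AEMeasurable (φ j) μ := fun j =>
    (((hc.comp hu).comp_aestronglyMeasurable (hf j).1).sub
      ((hc.comp hu).comp_aestronglyMeasurable hg.1)).enorm
  have hGm : ∀ j, AEMeasurable (G j) μ := fun j =>
    ((hpow_m _ (hf j).1).const_mul C).add ((hpow_m _ hg.1).const_mul C)
  -- pointwise bound
  have hbd : ∀ (z w : ℂ), (‖h (u z) - h (u w)‖₊ : ENNReal)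
      ≤ C * (‖z‖₊ : ENNReal) ^ p + C * (‖w‖₊ : ENNReal) ^ p := by
    intro z w
    have hr : ‖h (u z) - h (u w)‖ ≤ γ * ‖z‖ ^ p + γ * ‖w‖ ^ p := by
      have t1 : |h (u z)| ≤ γ * ‖z‖ ^ p := (hb _).trans (by
        have := Real.rpow_le_rpow (abs_nonneg _) (hu1 z) hp0.le
        nlinarith [Real.rpow_nonneg (abs_nonneg (u z)) p])
      have t2 : |h (u w)| ≤ γ * ‖w‖ ^ p := (hb _).trans (by
        have := Real.rpow_le_rpow (abs_nonneg _) (hu1 w) hp0.le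
        nlinarith [Real.rpow_nonneg (abs_nonneg (u w)) p])
      calc ‖h (u z) - h (u w)‖ ≤ |h (u z)| + |h (u w)| := norm_sub_le _ _
        _ ≤ γ * ‖z‖ ^ p + γ * ‖w‖ ^ p := add_le_add t1 t2
    have coeeq : ∀ (v : ℂ), C * (‖v‖₊ : ENNReal) ^ p = ENNReal.ofReal (γ * ‖v‖ ^ p) := by
      intro v
      rw [ENNReal.ofReal_mul hγ, ← ENNReal.ofReal_rpow_of_nonneg (norm_nonneg _) hp0.le,
        ofReal_norm, enorm_eq_nnnorm]
    rw [coeeq, coeeq, ← ENNReal.ofReal_add (by positivity) (by positivity),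
      ← enorm_eq_nnnorm, ← ofReal_norm]
    exact ENNReal.ofReal_le_ofReal hr
  have hle : ∀ j, φ j ≤ᵐ[μ] G j :=
    fun j => Filter.Eventually.of_forall fun x => hbd (f j x) (g x)
  -- a.e. convergences
  have hφ0 : ∀ᵐ x ∂μ, Tendsto (fun j => φ j x) atTop (nhds 0) := by
    filter_upwards [hae] with x hx
    have hT : Tendsto (fun j => h (u (f j x)) - h (u (g x))) atTop (nhds 0) := by
      have := ((hc.comp hu).continuousAt (x := g x)).tendsto.comp hx
      simpa using this.sub_const (h (u (g x)))
    have := (ENNReal.tendsto_coe.mpr hT.nnnorm)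
    simpa using this
  have hGt : ∀ᵐ x ∂μ, Tendsto (fun j => G j x) atTop (nhds (Glim x)) := by
    filter_upwards [hae] with x hx
    have h1 : Tendsto (fun j => (‖f j x‖₊ : ENNReal) ^ p) atTop
        (nhds ((‖g x‖₊ : ENNReal) ^ p)) :=
      (ENNReal.tendsto_coe.mpr hx.nnnorm).ennrpow_const p
    exact Tendsto.add (ENNReal.Tendsto.const_mul h1 (Or.inr hCt)) tendsto_const_nhds
  -- finiteness
  have hfinF : ∀ (F : X → ℂ), MemLp F (ENNReal.ofReal p) μ →
      (∫⁻ x, (‖F x‖₊ : ENNReal) ^ p ∂μ) ≠ ⊤ := by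
    intro F hF
    have := lintegral_rpow_enorm_lt_top_of_eLpNorm_lt_top hq0 hqt hF.2
    rw [ENNReal.toReal_ofReal hp0.le] at this
    exact this.ne
  have hGint_eq : ∀ j, (∫⁻ x, G j x ∂μ)
      = C * (∫⁻ x, (‖f j x‖₊ : ENNReal) ^ p ∂μ) + C * (∫⁻ x, (‖g x‖₊ : ENNReal) ^ p ∂μ) := by
    intro j
    rw [hG]
    rw [lintegral_add_left' ((hpow_m _ (hf j).1).const_mul C),
      lintegral_const_mul' _ _ hCt, lintegral_const_mul' _ _ hCt]
  have hGlim_eq : (∫⁻ x, Glim x ∂μ)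
      = C * (∫⁻ x, (‖g x‖₊ : ENNReal) ^ p ∂μ) + C * (∫⁻ x, (‖g x‖₊ : ENNReal) ^ p ∂μ) := by
    rw [hGl, lintegral_add_left' ((hpow_m _ hg.1).const_mul C),
      lintegral_const_mul' _ _ hCt]
  have hGfin : ∀ j, (∫⁻ x, G j x ∂μ) ≠ ⊤ := by
    intro j
    rw [hGint_eq j]
    exact ENNReal.add_ne_top.mpr ⟨ENNReal.mul_ne_top hCt (hfinF _ (hf j)),
      ENNReal.mul_ne_top hCt (hfinF _ hg)⟩
  have hGlimfin : (∫⁻ x, Glim x ∂μ) ≠ ⊤ := by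
    rw [hGlim_eq]
    exact ENNReal.add_ne_top.mpr ⟨ENNReal.mul_ne_top hCt (hfinF _ hg),
      ENNReal.mul_ne_top hCt (hfinF _ hg)⟩
  have hsubm : ∀ j, AEMeasurable (fun x => G j x - φ j x) μ :=
    fun j => (hGm j).sub (hφm j)
  have hGint : Tendsto (fun j => ∫⁻ x, G j x ∂μ) atTop (nhds (∫⁻ x, Glim x ∂μ)) := by
    simp only [hGint_eq, hGlim_eq]
    exact Tendsto.add
      (ENNReal.Tendsto.const_mul (lintegral_rpow_tendsto hp hf hg hLp) (Or.inr hCt))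
      tendsto_const_nhds
  exact gdct hφm hle hφ0 hGt hGfin hGlimfin hsubm hGint
end comp3

/-- The integral valuation associated to `h₁, h₂, h₃, h₄`. -/
noncomputable def Phi {X : Type*} [MeasurableSpace X] (μ : Measure X)
    (h₁ h₂ h₃ h₄ : ℝ → ℝ) (f : X → ℂ) : ℂ :=
  ((∫ x, (h₁ (f x).re + h₃ (f x).im) ∂μ : ℝ) : ℂ) +
    Complex.I * ((∫ x, (h₂ (f x).re + h₄ (f x).im) ∂μ : ℝ) : ℂ)

theorem phi_continuous {X : Type*} [MeasurableSpace X] (μ : Measure X)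
    (hμ : μ Set.univ = ⊤) (p : ℝ) (hp : 1 ≤ p)
    (h₁ h₂ h₃ h₄ : ℝ → ℝ) (γ₁ γ₂ γ₃ γ₄ : ℝ)
    (hc₁ : Continuous h₁) (hc₂ : Continuous h₂) (hc₃ : Continuous h₃) (hc₄ : Continuous h₄)
    (hγ₁ : 0 ≤ γ₁) (hγ₂ : 0 ≤ γ₂) (hγ₃ : 0 ≤ γ₃) (hγ₄ : 0 ≤ γ₄)
    (hb₁ : ∀ a : ℝ, |h₁ a| ≤ γ₁ * |a| ^ p) (hb₂ : ∀ a : ℝ, |h₂ a| ≤ γ₂ * |a| ^ p)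
    (hb₃ : ∀ a : ℝ, |h₃ a| ≤ γ₃ * |a| ^ p) (hb₄ : ∀ a : ℝ, |h₄ a| ≤ γ₄ * |a| ^ p)
    (f : ℕ → X → ℂ) (g : X → ℂ)
    (hf : ∀ j, MemLp (f j) (ENNReal.ofReal p) μ) (hg : MemLp g (ENNReal.ofReal p) μ)
    (hLp : Tendsto (fun j => eLpNorm (f j - g) (ENNReal.ofReal p) μ) atTop (nhds 0))
    (hae : ∀ᵐ x ∂μ, Tendsto (fun j => f j x) atTop (nhds (g x))) :
    Tendsto (fun j => Phi μ h₁ h₂ h₃ h₄ (f j)) atTop (nhds (Phi μ h₁ h₂ h₃ h₄ g)) := by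
  have hre : ∀ z : ℂ, |z.re| ≤ ‖z‖ := fun z => Complex.abs_re_le_norm z
  have him : ∀ z : ℂ, |z.im| ≤ ‖z‖ := fun z => Complex.abs_im_le_norm z
  have T₁ := tendsto_integral_comp hp hγ₁ hc₁ hb₁ Complex.continuous_re hre hf hg hLp hae
  have T₂ := tendsto_integral_comp hp hγ₂ hc₂ hb₂ Complex.continuous_re hre hf hg hLp hae
  have T₃ := tendsto_integral_comp hp hγ₃ hc₃ hb₃ Complex.continuous_im him hf hg hLp hae
  have T₄ := tendsto_integral_comp hp hγ₄ hc₄ hb₄ Complex.continuous_im him hf hg hLp hae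
  have hsplit : ∀ (h h' : ℝ → ℝ) (γ γ' : ℝ), Continuous h → Continuous h' →
      (∀ a : ℝ, |h a| ≤ γ * |a| ^ p) → (∀ a : ℝ, |h' a| ≤ γ' * |a| ^ p) →
      ∀ (F : X → ℂ), MemLp F (ENNReal.ofReal p) μ →
      (∫ x, (h (F x).re + h' (F x).im) ∂μ) = (∫ x, h (F x).re ∂μ) + ∫ x, h' (F x).im ∂μ := by
    intro h h' γ γ' hc hc' hb hb' F hF
    exact integral_add (integrable_comp_aux hp hc hb Complex.continuous_re hre hF)
      (integrable_comp_aux hp hc' hb' Complex.continuous_im him hF)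
  have hA : Tendsto (fun j => ∫ x, (h₁ (f j x).re + h₃ (f j x).im) ∂μ) atTop
      (nhds (∫ x, (h₁ (g x).re + h₃ (g x).im) ∂μ)) := by
    simp only [fun j => hsplit h₁ h₃ γ₁ γ₃ hc₁ hc₃ hb₁ hb₃ (f j) (hf j),
      hsplit h₁ h₃ γ₁ γ₃ hc₁ hc₃ hb₁ hb₃ g hg]
    exact T₁.add T₃
  have hB : Tendsto (fun j => ∫ x, (h₂ (f j x).re + h₄ (f j x).im) ∂μ) atTop
      (nhds (∫ x, (h₂ (g x).re + h₄ (g x).im) ∂μ)) := by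
    simp only [fun j => hsplit h₂ h₄ γ₂ γ₄ hc₂ hc₄ hb₂ hb₄ (f j) (hf j),
      hsplit h₂ h₄ γ₂ γ₄ hc₂ hc₄ hb₂ hb₄ g hg]
    exact T₂.add T₄
  unfold Phi
  exact ((Complex.continuous_ofReal.tendsto _).comp hA).add
    (((Complex.continuous_ofReal.tendsto _).comp hB).const_mul Complex.I)
end
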